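/- For k ≥ 2, the hyperbinary expansions of 2^k are exactly: 1 followed by k zeros; 2 followed by k−1 zeros; and, for each 0 < h < k, a block of h ones followed by a 2 followed by k−h−1 zeros. In particular b(2^k) = k+1. -/

import Mathlib

/-- The integer represented by a word of digits (most significant first). -/
def hval (w : List ℕ) : ℕ := w.foldl (fun a d => 2 * a + d) 0

/-- `w` is a hyperbinary expansion of `n`: digits in {0,1,2}, nonzero leading
digit, representing `n`.  (The empty word is the unique expansion of `0`.) -/
def IsHyp (n : ℕ) (w : List ℕ) : Prop :=
  (∀ d ∈ w, d ≤ 2) ∧ w.head? ≠ some 0 ∧ hval w = n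

/-- `b n`: the number of hyperbinary expansions of `n` (so `b 0 = 1`). -/
noncomputable def hb (n : ℕ) : ℕ := Set.ncard {w : List ℕ | IsHyp n w}

/-- A single rewriting step: `02 → 10` or `12 → 20`, a leading `2` treated as `02`. -/
def Step (u v : List ℕ) : Prop :=
  (∃ x y : List ℕ, u = x ++ [0, 2] ++ y ∧ v = x ++ [1, 0] ++ y) ∨
  (∃ x y : List ℕ, u = x ++ [1, 2] ++ y ∧ v = x ++ [2, 0] ++ y) ∨
  (∃ y : List ℕ, u = 2 :: y ∧ v = 1 :: 0 :: y)

/-- Strict shortlex order: first by length, then lexicographically. -/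
def Shortlex (u v : List ℕ) : Prop :=
  u.length < v.length ∨ (u.length = v.length ∧ List.Lex (· < ·) u v)

/-- Number of maximal blocks of consecutive `2`'s in a word. -/
def blocks2 : List ℕ → ℕ
  | [] => 0
  | d :: rest => blocks2 rest + (if d = 2 ∧ rest.head? ≠ some 2 then 1 else 0)

lemma foldl_hval (w : List ℕ) (a : ℕ) :
    w.foldl (fun a d => 2 * a + d) a = a * 2 ^ w.length + hval w := by
  induction w generalizing a with
  | nil => simp [hval]
  | cons d t ih =>
      have h1 : hval (d :: t) = d * 2 ^ t.length + hval t := by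
        show List.foldl _ (2 * 0 + d) t = _
        rw [show 2 * 0 + d = d by ring, ih d]
      simp only [List.foldl_cons, List.length_cons, h1, ih (2 * a + d), pow_succ]
      ring

lemma hval_cons (d : ℕ) (t : List ℕ) : hval (d :: t) = d * 2 ^ t.length + hval t := by
  show List.foldl _ (2 * 0 + d) t = _
  rw [show 2 * 0 + d = d by ring, foldl_hval]

lemma hval_append (u v : List ℕ) : hval (u ++ v) = hval u * 2 ^ v.length + hval v := by
  unfold hval
  rw [List.foldl_append, foldl_hval]
  rfl

lemma hval_rep0 (m : ℕ) : hval (List.replicate m 0) = 0 := by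
  induction m with
  | zero => rfl
  | succ m ih => rw [List.replicate_succ, hval_cons, ih]; ring

lemma hval_rep1 (m : ℕ) : hval (List.replicate m 1) = 2 ^ m - 1 := by
  induction m with
  | zero => rfl
  | succ m ih =>
      rw [List.replicate_succ, hval_cons, ih, List.length_replicate, pow_succ]
      have : 1 ≤ 2 ^ m := Nat.one_le_two_pow
      omega

lemma hval_le (w : List ℕ) (hw : ∀ d ∈ w, d ≤ 2) : hval w + 2 ≤ 2 ^ (w.length + 1) := by
  induction w with
  | nil => simp [hval]
  | cons d t ih =>
      have hd : d ≤ 2 := hw d (List.mem_cons_self)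
      have ht := ih (fun x hx => hw x (List.mem_cons_of_mem _ hx))
      rw [hval_cons, List.length_cons]
      have h2 : 2 ^ (t.length + 1 + 1) = 2 * 2 ^ (t.length + 1) := by ring
      have h3 : 2 ^ (t.length + 1) = 2 * 2 ^ t.length := by ring
      nlinarith [Nat.one_le_two_pow (n := t.length)]

lemma eq_rep0 (w : List ℕ) (h : hval w = 0) : w = List.replicate w.length 0 := by
  induction w with
  | nil => rfl
  | cons d t ih =>
      rw [hval_cons] at h
      have hp : 0 < 2 ^ t.length := Nat.pow_pos (by norm_num)
      have hd : d = 0 := by nlinarith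
      have ht : hval t = 0 := by omega
      rw [List.length_cons, List.replicate_succ, hd, ih ht]
      simp

lemma key : ∀ m : ℕ, ∀ w : List ℕ, w.length = m → (∀ d ∈ w, d ≤ 2) → hval w = 2 ^ m →
    ∃ h, h < m ∧ w = List.replicate h 1 ++ [2] ++ List.replicate (m - h - 1) 0 := by
  intro m
  induction m with
  | zero =>
      intro w hl _ hv
      rw [List.length_eq_zero_iff] at hl
      subst hl
      simp [hval] at hv
  | succ m ih =>
      intro w hl hw hv
      match w with
      | [] => simp at hl
      | d :: t =>
        have htl : t.length = m := by simpa using hl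
        have hd : d ≤ 2 := hw d (List.mem_cons_self)
        rw [hval_cons, htl] at hv
        have ht2 := hval_le t (fun x hx => hw x (List.mem_cons_of_mem _ hx))
        rw [htl] at ht2
        have hpow : 2 ^ (m + 1) = 2 * 2 ^ m := by ring
        interval_cases d
        · omega
        · have ht : hval t = 2 ^ m := by omega
          obtain ⟨h, hh, rfl⟩ := ih t htl (fun x hx => hw x (List.mem_cons_of_mem _ hx)) ht
          refine ⟨h + 1, by omega, ?_⟩
          rw [show m + 1 - (h + 1) - 1 = m - h - 1 by omega]
          simp [List.replicate_succ]
        · have ht : hval t = 0 := by omega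
          refine ⟨0, by omega, ?_⟩
          have := eq_rep0 t ht
          rw [htl] at this
          simp [this]

lemma hval_canon (h z : ℕ) :
    hval (List.replicate h 1 ++ [2] ++ List.replicate z 0) = 2 ^ (h + 1 + z) := by
  rw [hval_append, hval_append, hval_rep0, hval_rep1, List.length_replicate]
  have : hval [2] = 2 := rfl
  rw [this]
  have h1 : 1 ≤ 2 ^ h := Nat.one_le_two_pow
  have : ((2 ^ h - 1) * 2 ^ ([2] : List ℕ).length + 2) = 2 ^ (h + 1) := by
    simp [pow_succ]; omega
  rw [this, add_zero, ← pow_add]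

theorem stmt11' (k : ℕ) (hk : 2 ≤ k) :
    {w : List ℕ | (∀ d ∈ w, d ≤ 2) ∧ w.head? ≠ some 0 ∧ hval w = 2 ^ k} =
      {1 :: List.replicate k 0} ∪ {2 :: List.replicate (k - 1) 0} ∪
      {w : List ℕ | ∃ h : ℕ, 0 < h ∧ h < k ∧
        w = List.replicate h 1 ++ [2] ++ List.replicate (k - h - 1) 0} := by
  have h2k : 2 ^ k = 2 * 2 ^ (k - 1) := by
    rw [← pow_succ']; congr 1; omega
  ext w
  simp only [Set.mem_setOf_eq, Set.mem_union, Set.mem_singleton_iff]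
  constructor
  · rintro ⟨hw, hh, hv⟩
    match w with
    | [] =>
        exfalso
        have h1 : 1 ≤ 2 ^ k := Nat.one_le_two_pow
        simp [hval] at hv
        omega
    | d :: t =>
      have hd0 : d ≠ 0 := by simpa using hh
      have hd2 : d ≤ 2 := hw d (List.mem_cons_self)
      rw [hval_cons] at hv
      have ht2 := hval_le t (fun x hx => hw x (List.mem_cons_of_mem _ hx))
      have hub : t.length ≤ k := by
        have h1 : 2 ^ t.length ≤ 2 ^ k :=
          calc 2 ^ t.length ≤ d * 2 ^ t.length := Nat.le_mul_of_pos_left _ (by omega)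
            _ ≤ 2 ^ k := by omega
        exact (Nat.pow_le_pow_iff_right (by norm_num)).mp h1
      have hlb : k ≤ t.length + 1 := by
        by_contra hcon
        push_neg at hcon
        have h1 : 2 ^ (t.length + 2) ≤ 2 ^ k := Nat.pow_le_pow_right (by norm_num) (by omega)
        have h2 : 2 ^ (t.length + 1) = 2 * 2 ^ t.length := by ring
        have h3 : 2 ^ (t.length + 2) = 4 * 2 ^ t.length := by ring
        nlinarith [Nat.one_le_two_pow (n := t.length)]
      have hcase : t.length = k ∨ t.length = k - 1 := by omega
      rcases hcase with he | he
      · left; left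
        rw [he] at hv
        have hp : 1 ≤ 2 ^ k := Nat.one_le_two_pow
        have hd1 : d = 1 := by
          rcases (by omega : d = 1 ∨ d = 2) with h | h
          · exact h
          · exfalso; rw [h] at hv; omega
        rw [hd1, one_mul] at hv
        have ht0 : hval t = 0 := by omega
        rw [hd1, eq_rep0 t ht0, he]
      · rw [he] at hv
        rcases (by omega : d = 1 ∨ d = 2) with rfl | rfl
        · have ht : hval t = 2 ^ (k - 1) := by omega
          obtain ⟨h, hh', rfl⟩ := key (k - 1) t (by omega)
            (fun x hx => hw x (List.mem_cons_of_mem _ hx)) ht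
          right
          refine ⟨h + 1, by omega, by omega, ?_⟩
          rw [show k - (h + 1) - 1 = k - 1 - h - 1 by omega]
          simp [List.replicate_succ]
        · have ht0 : hval t = 0 := by omega
          left; right
          rw [eq_rep0 t ht0, he]
  · rintro ((rfl | rfl) | ⟨h, hh0, hhk, rfl⟩)
    · refine ⟨?_, by simp, ?_⟩
      · intro d hd
        rcases List.mem_cons.mp hd with rfl | hd
        · omega
        · rw [List.eq_of_mem_replicate hd]; omega
      · rw [hval_cons, hval_rep0, List.length_replicate]; ring
    · refine ⟨?_, by simp, ?_⟩
      · intro d hd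
        rcases List.mem_cons.mp hd with rfl | hd
        · omega
        · rw [List.eq_of_mem_replicate hd]; omega
      · rw [hval_cons, hval_rep0, List.length_replicate]; omega
    · refine ⟨?_, ?_, ?_⟩
      · intro d hd
        simp only [List.append_assoc, List.mem_append, List.mem_singleton] at hd
        rcases hd with hd | hd | hd
        · rw [List.eq_of_mem_replicate hd]; omega
        · omega
        · rw [List.eq_of_mem_replicate hd]; omega
      · obtain ⟨h', rfl⟩ : ∃ h', h = h' + 1 := ⟨h - 1, by omega⟩
        simp [List.replicate_succ]
      · rw [hval_canon, show h + 1 + (k - h - 1) = k by omega]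

theorem stmt11 (k : ℕ) (hk : 2 ≤ k) :
    {w : List ℕ | IsHyp (2 ^ k) w} =
      {1 :: List.replicate k 0} ∪ {2 :: List.replicate (k - 1) 0} ∪
      {w : List ℕ | ∃ h : ℕ, 0 < h ∧ h < k ∧
        w = List.replicate h 1 ++ [2] ++ List.replicate (k - h - 1) 0} ∧
    hb (2 ^ k) = k + 1 := by
  have hset := stmt11' k hk
  have hset' : {w : List ℕ | IsHyp (2 ^ k) w} =
      {1 :: List.replicate k 0} ∪ {2 :: List.replicate (k - 1) 0} ∪
      {w : List ℕ | ∃ h : ℕ, 0 < h ∧ h < k ∧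
        w = List.replicate h 1 ++ [2] ++ List.replicate (k - h - 1) 0} := by
    rw [← hset]; rfl
  refine ⟨hset', ?_⟩
  set g : ℕ → List ℕ := fun h => List.replicate h 1 ++ [2] ++ List.replicate (k - h - 1) 0
    with hg
  have himg : ({1 :: List.replicate k 0} ∪ {2 :: List.replicate (k - 1) 0} ∪
      {w : List ℕ | ∃ h : ℕ, 0 < h ∧ h < k ∧
        w = List.replicate h 1 ++ [2] ++ List.replicate (k - h - 1) 0} : Set (List ℕ)) =
      insert (1 :: List.replicate k 0) (g '' ↑(Finset.range k)) := by
    ext w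
    simp only [Set.mem_union, Set.mem_singleton_iff, Set.mem_setOf_eq, Set.mem_insert_iff,
      Set.mem_image, Finset.coe_range, Set.mem_Iio]
    constructor
    · rintro ((rfl | rfl) | ⟨h, hh0, hhk, rfl⟩)
      · left; rfl
      · right; exact ⟨0, by omega, by simp [hg]⟩
      · right; exact ⟨h, hhk, rfl⟩
    · rintro (rfl | ⟨h, hh, rfl⟩)
      · left; left; rfl
      · rcases Nat.eq_zero_or_pos h with rfl | hpos
        · left; right; simp [hg]
        · right; exact ⟨h, hpos, hh, rfl⟩
  have hcount : ∀ h, (g h).count 1 = h := by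
    intro h
    simp [hg, List.count_append, List.count_replicate]
  have hinj : Set.InjOn g ↑(Finset.range k) := by
    intro a _ b _ hab
    have := congrArg (List.count 1) hab
    rwa [hcount, hcount] at this
  have hnm : 1 :: List.replicate k 0 ∉ g '' ↑(Finset.range k) := by
    rintro ⟨h, hh, heq⟩
    simp only [Finset.coe_range, Set.mem_Iio] at hh
    have := congrArg List.length heq
    simp [hg] at this
    omega
  rw [hb, hset', himg,
    Set.ncard_insert_of_notMem hnm (((Finset.range k).finite_toSet).image g),
    Set.ncard_image_of_injOn hinj, Set.ncard_coe_finset, Finset.card_range]
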